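/- Let H₀ be a skew-symmetric operator, set 𝒢₁ := ker(1 − H₀*) and 𝒢₂ := ker(1 + H₀*), and assume the direct sum decomposition D(H₀*) = D(H₀) ∔ 𝒢₁ ∔ 𝒢₂ with projections P₁, P₂. Then for every y ∈ D(H₀) ∔ 𝒢₁ one has Re (y + H₀*y, y)_ℋ = ‖y‖² + ‖P₁y‖² ≥ ‖y‖². In particular, the operator y ↦ y + H₀*y is injective on D(H₀) ∔ 𝒢₁. -/

import Mathlib

open scoped InnerProductSpace

lemma stmt11_re_helper {ℋ : Type*} [NormedAddCommGroup ℋ] [InnerProductSpace ℂ ℋ]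
    (u v b : ℋ) (h1 : ⟪-u, v⟫_ℂ = ⟪v, u⟫_ℂ) (h2 : ⟪b, v⟫_ℂ = ⟪b, u⟫_ℂ) :
    (⟪(v + b) + (-u + b), v + b⟫_ℂ).re = ‖v + b‖ ^ 2 + ‖b‖ ^ 2 := by
  have rsym : (⟪u, v⟫_ℂ).re = (⟪v, u⟫_ℂ).re := by
    rw [← inner_conj_symm v u, Complex.conj_re]
  have h1' := congrArg Complex.re h1
  rw [inner_neg_left, Complex.neg_re] at h1'
  have e1 : (⟪u, v⟫_ℂ).re = 0 := by linarith
  have e2 : (⟪b, v⟫_ℂ).re = (⟪u, b⟫_ℂ).re := by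
    have := congrArg Complex.re h2
    rwa [← inner_conj_symm b u, Complex.conj_re] at this
  have hvb : (⟪v + b, v + b⟫_ℂ).re = ‖v + b‖ ^ 2 := by
    rw [inner_self_eq_norm_sq_to_K]; norm_cast
  have hbb : (⟪b, b⟫_ℂ).re = ‖b‖ ^ 2 := by
    rw [inner_self_eq_norm_sq_to_K]; norm_cast
  rw [inner_add_left, Complex.add_re, hvb, inner_add_left, inner_neg_left,
    inner_add_right, inner_add_right, Complex.add_re, Complex.neg_re, Complex.add_re,
    Complex.add_re, hbb, e1, e2]
  ring

theorem stmt_11 {ℋ : Type*}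
    [NormedAddCommGroup ℋ] [InnerProductSpace ℂ ℋ] [CompleteSpace ℋ]
    (H₀ : ℋ →ₗ.[ℂ] ℋ)
    (hdense : Dense (H₀.domain : Set ℋ)) (hclosed : H₀.IsClosed)
    (hskew : H₀ ≤ -H₀.adjoint)
    (P₁ P₂ : H₀.adjoint.domain →ₗ[ℂ] H₀.adjoint.domain)
    (hP₁ : ∀ x : H₀.adjoint.domain, H₀.adjoint (P₁ x) = (P₁ x : ℋ))
    (hP₂ : ∀ x : H₀.adjoint.domain, H₀.adjoint (P₂ x) = -(P₂ x : ℋ))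
    (hP₀ : ∀ x : H₀.adjoint.domain, ((x - P₁ x - P₂ x : H₀.adjoint.domain) : ℋ) ∈ H₀.domain)
    (huniq : ∀ x a b : H₀.adjoint.domain, H₀.adjoint a = (a : ℋ) → H₀.adjoint b = -(b : ℋ) →
      ((x - a - b : H₀.adjoint.domain) : ℋ) ∈ H₀.domain → a = P₁ x ∧ b = P₂ x) :
    (∀ y : H₀.adjoint.domain,
      (∃ y₀ a : H₀.adjoint.domain,
          ((y₀ : ℋ) ∈ H₀.domain) ∧ H₀.adjoint a = (a : ℋ) ∧ y = y₀ + a) →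
        (⟪(y : ℋ) + H₀.adjoint y, (y : ℋ)⟫_ℂ).re = ‖(y : ℋ)‖ ^ 2 + ‖(P₁ y : ℋ)‖ ^ 2 ∧
          ‖(y : ℋ)‖ ^ 2 ≤ (⟪(y : ℋ) + H₀.adjoint y, (y : ℋ)⟫_ℂ).re) ∧
    (∀ y y' : H₀.adjoint.domain,
      (∃ y₀ a : H₀.adjoint.domain,
          ((y₀ : ℋ) ∈ H₀.domain) ∧ H₀.adjoint a = (a : ℋ) ∧ y = y₀ + a) →
      (∃ y₀ a : H₀.adjoint.domain,
          ((y₀ : ℋ) ∈ H₀.domain) ∧ H₀.adjoint a = (a : ℋ) ∧ y' = y₀ + a) →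
      (y : ℋ) + H₀.adjoint y = (y' : ℋ) + H₀.adjoint y' → y = y') := by
  have hfa : H₀.adjoint.IsFormalAdjoint H₀ := LinearPMap.adjoint_isFormalAdjoint hdense
  -- adjoint acts as -H₀ on elements of D(H₀)
  have hneg : ∀ (y₀ : H₀.adjoint.domain) (h : (y₀ : ℋ) ∈ H₀.domain),
      H₀.adjoint y₀ = -(H₀ ⟨(y₀ : ℋ), h⟩) := by
    intro y₀ h
    have := hskew.2 (x := ⟨(y₀ : ℋ), h⟩) (y := y₀) rfl
    rw [LinearPMap.neg_apply] at this
    rw [this, neg_neg]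
  have main : ∀ y : H₀.adjoint.domain,
      (∃ y₀ a : H₀.adjoint.domain,
          ((y₀ : ℋ) ∈ H₀.domain) ∧ H₀.adjoint a = (a : ℋ) ∧ y = y₀ + a) →
      ∃ a : H₀.adjoint.domain, a = P₁ y ∧
        (⟪(y : ℋ) + H₀.adjoint y, (y : ℋ)⟫_ℂ).re = ‖(y : ℋ)‖ ^ 2 + ‖(a : ℋ)‖ ^ 2 := by
    rintro y ⟨y₀, a, hy₀, ha, rfl⟩
    refine ⟨a, ?_, ?_⟩
    · have h0 : H₀.adjoint (0 : H₀.adjoint.domain) = -((0 : H₀.adjoint.domain) : ℋ) := by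
        simp [LinearPMap.map_zero]
      have hmem : (((y₀ + a) - a - 0 : H₀.adjoint.domain) : ℋ) ∈ H₀.domain := by
        simpa using hy₀
      exact (huniq (y₀ + a) a 0 ha h0 hmem).1
    · set y₀' : H₀.domain := ⟨(y₀ : ℋ), hy₀⟩
      have hady₀ : H₀.adjoint y₀ = -(H₀ y₀') := hneg y₀ hy₀
      have hadsum : H₀.adjoint (y₀ + a) = -(H₀ y₀') + (a : ℋ) := by
        rw [LinearPMap.map_add, hady₀, ha]
      have hcoe : ((y₀ + a : H₀.adjoint.domain) : ℋ) = (y₀ : ℋ) + (a : ℋ) := rfl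
      rw [hadsum, hcoe]
      refine stmt11_re_helper (H₀ y₀') (y₀ : ℋ) (a : ℋ) ?_ ?_
      · have := hfa y₀ y₀'
        rwa [hady₀] at this
      · have := hfa a y₀'
        rwa [ha] at this
  constructor
  · intro y hy
    obtain ⟨a, haP, hre⟩ := main y hy
    rw [← haP]
    refine ⟨hre, ?_⟩
    rw [hre]
    nlinarith [sq_nonneg ‖(a : ℋ)‖]
  · rintro y y' ⟨y₀, a, hy₀, ha, rfl⟩ ⟨y₀', a', hy₀', ha', rfl⟩ heq
    set z : H₀.adjoint.domain := (y₀ + a) - (y₀' + a')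
    have hzdec : ∃ w b : H₀.adjoint.domain,
        ((w : ℋ) ∈ H₀.domain) ∧ H₀.adjoint b = (b : ℋ) ∧ z = w + b := by
      refine ⟨y₀ - y₀', a - a', ?_, ?_, by show y₀ + a - (y₀' + a') = y₀ - y₀' + (a - a'); abel⟩
      · exact sub_mem hy₀ hy₀'
      · rw [LinearPMap.map_sub, ha, ha']; rfl
    obtain ⟨b, _, hre⟩ := main z hzdec
    have hz0 : (z : ℋ) + H₀.adjoint z = 0 := by
      have : H₀.adjoint z = H₀.adjoint (y₀ + a) - H₀.adjoint (y₀' + a') :=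
        LinearPMap.map_sub _ _ _
      rw [this]
      have hzc : (z : ℋ) = ((y₀ + a : H₀.adjoint.domain) : ℋ) -
          ((y₀' + a' : H₀.adjoint.domain) : ℋ) := rfl
      rw [hzc]
      rw [sub_add_sub_comm, heq, sub_self]
    have hle : ‖(z : ℋ)‖ ^ 2 ≤ 0 := by
      have h2 := (main z hzdec).choose_spec.2
      have := hre
      rw [hz0] at this
      simp only [inner_zero_left, Complex.zero_re] at this
      nlinarith [sq_nonneg ‖(b : ℋ)‖]
    have hz : (z : ℋ) = 0 := by
      have : ‖(z : ℋ)‖ = 0 := by nlinarith [norm_nonneg (z : ℋ)]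
      exact norm_eq_zero.mp this
    have : z = 0 := Subtype.ext hz
    exact sub_eq_zero.mp this
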